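/- arXiv:1904.11648 — 6 statements merged into one kernel-verified Lean document; each statement's English description precedes it below -/
import Mathlib

section
/- Let b = (b₁, b₂) ∈ ℝ² and λ₁, λ₂, λ₃ > 0. The function l(θ) = (1/2)‖θ − b‖² + λ₁‖θ‖₂ + λ₂‖θ‖₂² + λ₃|θ₂| over θ = (θ₁, θ₂) ∈ ℝ² is uniquely minimized at θ₁ = (1/(1+2λ₂))·(1 − λ₁/√(b₁² + s(b₂,λ₃)²))₊ · b₁ and θ₂ = (1/(1+2λ₂))·(1 − λ₁/√(b₁² + s(b₂,λ₃)²))₊ · s(b₂, λ₃), where s(b₂, λ₃) = sign(b₂)(|b₂| − λ₃)₊, with the convention that θ = (0,0) when √(b₁² + s(b₂,λ₃)²) ≤ λ₁. -/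
/-- Lemma 1: closed form of the proximal operator of
`λ₁‖θ‖₂ + λ₂‖θ‖₂² + λ₃|θ₂|` on ℝ². -/
theorem lemma1_prox_closed_form (b₁ b₂ lam1 lam2 lam3 : ℝ)
    (h1 : 0 < lam1) (h2 : 0 < lam2) (h3 : 0 < lam3) :
    let s : ℝ := Real.sign b₂ * max (|b₂| - lam3) 0
    let c : ℝ := (1/(1+2*lam2)) * max (1 - lam1 / Real.sqrt (b₁^2 + s^2)) 0
    let l : ℝ → ℝ → ℝ := fun θ₁ θ₂ =>
      (1/2) * ((θ₁ - b₁)^2 + (θ₂ - b₂)^2) + lam1 * Real.sqrt (θ₁^2 + θ₂^2)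
        + lam2 * (θ₁^2 + θ₂^2) + lam3 * |θ₂|
    ∀ θ₁ θ₂ : ℝ, (θ₁, θ₂) ≠ (c * b₁, c * s) → l (c * b₁) (c * s) < l θ₁ θ₂ := by
  intro s c l θ₁ θ₂ hne
  have hs : s = Real.sign b₂ * max (|b₂| - lam3) 0 := rfl
  have hcraw : c = (1/(1+2*lam2)) * max (1 - lam1 / Real.sqrt (b₁^2 + s^2)) 0 := rfl
  show (1/2) * ((c*b₁ - b₁)^2 + (c*s - b₂)^2) + lam1 * Real.sqrt ((c*b₁)^2 + (c*s)^2)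
      + lam2 * ((c*b₁)^2 + (c*s)^2) + lam3 * |c*s|
    < (1/2) * ((θ₁ - b₁)^2 + (θ₂ - b₂)^2) + lam1 * Real.sqrt (θ₁^2 + θ₂^2)
      + lam2 * (θ₁^2 + θ₂^2) + lam3 * |θ₂|
  clear_value s c l
  clear l
  have h2' : (0:ℝ) < 1 + 2*lam2 := by linarith
  obtain ⟨N, hNdef⟩ : ∃ x : ℝ, x = Real.sqrt (b₁^2 + s^2) := ⟨_, rfl⟩
  obtain ⟨Nθ, hNθdef⟩ : ∃ x : ℝ, x = Real.sqrt (θ₁^2 + θ₂^2) := ⟨_, rfl⟩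
  have hc : c = (1/(1+2*lam2)) * max (1 - lam1 / N) 0 := by rw [hcraw, hNdef]
  have hNnn : 0 ≤ N := hNdef ▸ Real.sqrt_nonneg _
  have hN2 : N^2 = b₁^2 + s^2 := by
    rw [hNdef]; exact Real.sq_sqrt (by positivity)
  have hNθnn : 0 ≤ Nθ := hNθdef ▸ Real.sqrt_nonneg _
  have hNθ2 : Nθ^2 = θ₁^2 + θ₂^2 := by
    rw [hNθdef]; exact Real.sq_sqrt (by positivity)
  have hcnn : 0 ≤ c := by
    rw [hc]
    exact mul_nonneg (by positivity) (le_max_right _ _)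
  -- Cauchy–Schwarz
  have hCSsq : (b₁*θ₁ + s*θ₂)^2 ≤ (N*Nθ)^2 := by
    have h := sq_nonneg (b₁*θ₂ - s*θ₁)
    nlinarith [hN2, hNθ2]
  have hCS : b₁*θ₁ + s*θ₂ ≤ N * Nθ := by
    nlinarith [mul_nonneg hNnn hNθnn]
  -- soft-threshold subgradient inequality
  have hA : lam3*|s| + (b₂-s)*(θ₂-s) ≤ lam3*|θ₂| := by
    rcases le_or_gt |b₂| lam3 with h | h
    · have hs0 : s = 0 := by
        rw [hs, max_eq_right (by linarith), mul_zero]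
      rw [hs0]
      have ha : b₂*θ₂ ≤ |b₂| * |θ₂| := by
        calc b₂*θ₂ ≤ |b₂*θ₂| := le_abs_self _
          _ = |b₂| * |θ₂| := abs_mul _ _
      have hb' : |b₂| * |θ₂| ≤ lam3*|θ₂| := mul_le_mul_of_nonneg_right h (abs_nonneg _)
      simp only [abs_zero, mul_zero, sub_zero, zero_add]
      linarith
    · rcases lt_trichotomy b₂ 0 with hb | hb | hb
      · have hsv : s = b₂ + lam3 := by
          rw [hs, Real.sign_of_neg hb, abs_of_neg hb,
            max_eq_left (by rw [abs_of_neg hb] at h; linarith)]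
          ring
        have hsneg : s < 0 := by
          rw [abs_of_neg hb] at h; rw [hsv]; linarith
        rw [abs_of_neg hsneg, hsv]
        have hth : -(lam3*θ₂) ≤ lam3*|θ₂| := by
          have := neg_abs_le θ₂
          nlinarith [abs_nonneg θ₂]
        linarith [hth]
      · exfalso; rw [hb, abs_zero] at h; linarith
      · have hsv : s = b₂ - lam3 := by
          rw [hs, Real.sign_of_pos hb, abs_of_pos hb,
            max_eq_left (by rw [abs_of_pos hb] at h; linarith)]
          ring
        have hspos : 0 < s := by
          rw [abs_of_pos hb] at h; rw [hsv]; linarith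
        rw [abs_of_pos hspos, hsv]
        have hth : lam3*θ₂ ≤ lam3*|θ₂| := by
          have := le_abs_self θ₂
          nlinarith
        linarith [hth]
  -- equality at the candidate point
  have hE : lam3*|c*s| = lam3*|s| + (b₂-s)*(c*s-s) := by
    rcases le_or_gt |b₂| lam3 with h | h
    · have hs0 : s = 0 := by
        rw [hs, max_eq_right (by linarith), mul_zero]
      rw [hs0]; simp
    · rcases lt_trichotomy b₂ 0 with hb | hb | hb
      · have hsv : s = b₂ + lam3 := by
          rw [hs, Real.sign_of_neg hb, abs_of_neg hb,
            max_eq_left (by rw [abs_of_neg hb] at h; linarith)]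
          ring
        have hsneg : s < 0 := by
          rw [abs_of_neg hb] at h; rw [hsv]; linarith
        have hcs0 : c*s ≤ 0 := mul_nonpos_of_nonneg_of_nonpos hcnn hsneg.le
        rw [abs_of_nonpos hcs0, abs_of_neg hsneg, hsv]
        ring
      · exfalso; rw [hb, abs_zero] at h; linarith
      · have hsv : s = b₂ - lam3 := by
          rw [hs, Real.sign_of_pos hb, abs_of_pos hb,
            max_eq_left (by rw [abs_of_pos hb] at h; linarith)]
          ring
        have hspos : 0 < s := by
          rw [abs_of_pos hb] at h; rw [hsv]; linarith
        have hcs0 : 0 ≤ c*s := mul_nonneg hcnn hspos.le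
        rw [abs_of_nonneg hcs0, abs_of_pos hspos, hsv]
        ring
  -- norm subgradient inequality
  have hB : 0 ≤ ((1+2*lam2)*c - 1)*(b₁*(θ₁-c*b₁)+s*(θ₂-c*s)) + lam1*(Nθ - c*N) := by
    rcases eq_or_lt_of_le hNnn with hN0 | hN0
    · have hN20 : N^2 = 0 := by rw [← hN0]; ring
      have hb1 : b₁ = 0 := by
        have hb2 : b₁^2 = 0 :=
          le_antisymm (by linarith [hN2, sq_nonneg s, hN20]) (sq_nonneg b₁)
        exact pow_eq_zero_iff two_ne_zero |>.mp hb2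
      have hs1 : s = 0 := by
        have hs2 : s^2 = 0 :=
          le_antisymm (by linarith [hN2, sq_nonneg b₁, hN20]) (sq_nonneg s)
        exact pow_eq_zero_iff two_ne_zero |>.mp hs2
      have e : ((1+2*lam2)*c - 1)*(b₁*(θ₁-c*b₁)+s*(θ₂-c*s)) + lam1*(Nθ - c*N)
          = lam1*Nθ := by
        linear_combination (((1+2*lam2)*c - 1)*(θ₁-c*b₁))*hb1
          + (((1+2*lam2)*c - 1)*(θ₂-c*s))*hs1 + lam1*c*hN0
      rw [e]
      positivity
    · rcases le_or_gt (1 - lam1/N) 0 with hM | hM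
      · have hc0 : c = 0 := by rw [hc, max_eq_right hM, mul_zero]
        have hNlam : N ≤ lam1 := by
          have h1N : (1:ℝ) ≤ lam1/N := by linarith
          calc N = 1*N := (one_mul N).symm
            _ ≤ (lam1/N)*N := mul_le_mul_of_nonneg_right h1N hNnn
            _ = lam1 := by field_simp
        have hNNθ : N*Nθ ≤ lam1*Nθ := mul_le_mul_of_nonneg_right hNlam hNθnn
        have e : ((1+2*lam2)*c - 1)*(b₁*(θ₁-c*b₁)+s*(θ₂-c*s)) + lam1*(Nθ - c*N)
            = -(b₁*θ₁+s*θ₂) + lam1*Nθ := by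
          linear_combination ((1+2*lam2)*(b₁*θ₁+s*θ₂)
            - (1+2*lam2)*c*(b₁^2+s^2) + (b₁^2+s^2) - lam1*N)*hc0
        rw [e]
        linarith
      · have hc1 : (1+2*lam2)*c = 1 - lam1/N := by
          rw [hc, max_eq_left hM.le]; field_simp
        have hdpos : 0 < lam1/N := div_pos h1 hN0
        have hCSd : (lam1/N)*(b₁*θ₁+s*θ₂) ≤ (lam1/N)*(N*Nθ) :=
          mul_le_mul_of_nonneg_left hCS hdpos.le
        have e1 : (lam1/N)*(N*Nθ) = lam1*Nθ := by
          field_simp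
        have e2 : (lam1/N)*(c*(b₁^2+s^2)) = lam1*(c*N) := by
          rw [← hN2]; field_simp
        have e : ((1+2*lam2)*c - 1)*(b₁*(θ₁-c*b₁)+s*(θ₂-c*s)) + lam1*(Nθ - c*N)
            = (lam1/N)*(c*(b₁^2+s^2)) - (lam1/N)*(b₁*θ₁+s*θ₂)
              + lam1*Nθ - lam1*(c*N) := by
          linear_combination (b₁*(θ₁-c*b₁)+s*(θ₂-c*s))*hc1
        rw [e, e2]
        linarith
  -- norm of candidate point
  have hcsqrt : Real.sqrt ((c*b₁)^2 + (c*s)^2) = c*N := by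
    rw [show (c*b₁)^2+(c*s)^2 = c^2*(b₁^2+s^2) by ring,
      Real.sqrt_mul (sq_nonneg c), Real.sqrt_sq hcnn, ← hNdef]
  -- strict positivity of the distance
  have hd : 0 < (θ₁-c*b₁)^2 + (θ₂-c*s)^2 := by
    have hor : θ₁ ≠ c*b₁ ∨ θ₂ ≠ c*s := by
      by_contra hcon
      push_neg at hcon
      exact hne (by rw [hcon.1, hcon.2])
    rcases hor with h | h
    · have := lt_of_le_of_ne (sq_nonneg (θ₁-c*b₁))
        (Ne.symm (pow_ne_zero 2 (sub_ne_zero.mpr h)))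
      linarith [this, sq_nonneg (θ₂-c*s)]
    · have := lt_of_le_of_ne (sq_nonneg (θ₂-c*s))
        (Ne.symm (pow_ne_zero 2 (sub_ne_zero.mpr h)))
      linarith [this, sq_nonneg (θ₁-c*b₁)]
  have hprod : 0 < (1+2*lam2)/2 * ((θ₁-c*b₁)^2 + (θ₂-c*s)^2) :=
    mul_pos (by linarith) hd
  rw [hcsqrt, ← hNθdef]
  linarith [hA, hE, hB, hprod]
end

section
/- With the notation of Lemma 1, if s(b₂, λ₃) = 0 then the minimizer of l(θ) = (1/2)‖θ − b‖² + λ₁‖θ‖₂ + λ₂‖θ‖₂² + λ₃|θ₂| satisfies θ₂ = 0 and θ₁ = (1/(1+2λ₂))·s(b₁, λ₁), i.e., when the soft-thresholded predictive component vanishes, the prognostic component reduces to a scaled soft-thresholding of b₁. -/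
lemma tri2 (x y x' y' : ℝ) :
    Real.sqrt ((x+x')^2+(y+y')^2) ≤ Real.sqrt (x^2+y^2) + Real.sqrt (x'^2+y'^2) := by
  have hB : (0:ℝ) ≤ x^2+y^2 := by positivity
  have hC : (0:ℝ) ≤ x'^2+y'^2 := by positivity
  have hsB := Real.sq_sqrt hB
  have hsC := Real.sq_sqrt hC
  have hnB := Real.sqrt_nonneg (x^2+y^2)
  have hnC := Real.sqrt_nonneg (x'^2+y'^2)
  have hcs : x*x'+y*y' ≤ Real.sqrt (x^2+y^2) * Real.sqrt (x'^2+y'^2) := by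
    nlinarith [sq_nonneg (x*y'-x'*y),
      sq_nonneg (Real.sqrt (x^2+y^2) * Real.sqrt (x'^2+y'^2) - (x*x'+y*y')),
      mul_nonneg hnB hnC]
  have h := Real.sqrt_le_sqrt (show (x+x')^2+(y+y')^2
      ≤ (Real.sqrt (x^2+y^2) + Real.sqrt (x'^2+y'^2))^2 by nlinarith)
  rwa [Real.sqrt_sq (by positivity)] at h

lemma oneD_nonneg (b lam1 lam2 u : ℝ) (h1 : 0 < lam1) (h2 : 0 < lam2) (hb : 0 ≤ b) :
    (1/2)*((1/(1+2*lam2)) * (Real.sign b * max (|b| - lam1) 0) - b)^2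
      + lam1*|(1/(1+2*lam2)) * (Real.sign b * max (|b| - lam1) 0)|
      + lam2*((1/(1+2*lam2)) * (Real.sign b * max (|b| - lam1) 0))^2
    ≤ (1/2)*(u-b)^2 + lam1*|u| + lam2*u^2 := by
  have ha : (0:ℝ) < 1+2*lam2 := by linarith
  have habs : |b| = b := abs_of_nonneg hb
  rcases le_or_gt b lam1 with hble | hbgt
  · have hmax : max (|b| - lam1) 0 = 0 := max_eq_right (by rw [habs]; linarith)
    rw [hmax]
    simp only [mul_zero, zero_sub, abs_zero]
    have hbu : b * u ≤ b * |u| := mul_le_mul_of_nonneg_left (le_abs_self u) hb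
    nlinarith [abs_nonneg u, sq_nonneg u, mul_nonneg h2.le (sq_nonneg u)]
  · have hbpos : 0 < b := lt_trans h1 hbgt
    have hsign : Real.sign b = 1 := Real.sign_of_pos hbpos
    have hmax : max (|b| - lam1) 0 = b - lam1 := by
      rw [habs]; exact max_eq_left (by linarith)
    rw [hsign, hmax, one_mul, habs] at *
    set c := (1/(1+2*lam2)) * (b - lam1) with hc
    have hcpos : 0 < c := by
      apply mul_pos (by positivity); linarith
    have hcabs : |c| = c := abs_of_nonneg hcpos.le
    rw [hcabs]
    have hceq : (1+2*lam2) * c = b - lam1 := by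
      rw [hc]; field_simp
    have hbu : b * u ≤ b * |u| := mul_le_mul_of_nonneg_left (le_abs_self u) hbpos.le
    have hsqabs : |u|^2 = u^2 := sq_abs u
    nlinarith [sq_nonneg (|u| - c), abs_nonneg u,
      mul_nonneg ha.le (sq_nonneg (|u| - c))]

lemma oneD (b lam1 lam2 u : ℝ) (h1 : 0 < lam1) (h2 : 0 < lam2) :
    (1/2)*((1/(1+2*lam2)) * (Real.sign b * max (|b| - lam1) 0) - b)^2
      + lam1*|(1/(1+2*lam2)) * (Real.sign b * max (|b| - lam1) 0)|
      + lam2*((1/(1+2*lam2)) * (Real.sign b * max (|b| - lam1) 0))^2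
    ≤ (1/2)*(u-b)^2 + lam1*|u| + lam2*u^2 := by
  rcases le_or_gt 0 b with hb | hb
  · exact oneD_nonneg b lam1 lam2 u h1 h2 hb
  · have h := oneD_nonneg (-b) lam1 lam2 (-u) h1 h2 (by linarith)
    have hsn : Real.sign (-b) = - Real.sign b := Real.sign_neg
    rw [hsn, abs_neg] at h
    have e1 : (1/(1+2*lam2)) * (-Real.sign b * max (|b| - lam1) 0) - -b
        = -((1/(1+2*lam2)) * (Real.sign b * max (|b| - lam1) 0) - b) := by ring
    rw [e1] at h
    have e2 : |((1:ℝ)/(1+2*lam2)) * (-Real.sign b * max (|b| - lam1) 0)|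
        = |(1/(1+2*lam2)) * (Real.sign b * max (|b| - lam1) 0)| := by
      rw [show ((1:ℝ)/(1+2*lam2)) * (-Real.sign b * max (|b| - lam1) 0)
          = -((1/(1+2*lam2)) * (Real.sign b * max (|b| - lam1) 0)) by ring, abs_neg]
    rw [e2, abs_neg, neg_sq] at h
    calc _ ≤ (1/2)*(-u - -b)^2 + lam1*|u| + lam2*(-u)^2 := by
            convert h using 3 <;> ring
      _ = (1/2)*(u-b)^2 + lam1*|u| + lam2*u^2 := by ring

/-- global lower bound: the candidate point minimizes the objective. -/
lemma lowerA (b₁ b₂ lam1 lam2 lam3 : ℝ) (h1 : 0 < lam1) (h2 : 0 < lam2)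
    (hb2 : |b₂| ≤ lam3) (t₁ t₂ : ℝ) :
    (1/2) * (((1/(1+2*lam2)) * (Real.sign b₁ * max (|b₁| - lam1) 0) - b₁)^2 + (0 - b₂)^2)
      + lam1 * Real.sqrt (((1/(1+2*lam2)) * (Real.sign b₁ * max (|b₁| - lam1) 0))^2 + 0^2)
      + lam2 * (((1/(1+2*lam2)) * (Real.sign b₁ * max (|b₁| - lam1) 0))^2 + 0^2)
      + lam3 * |(0:ℝ)|
    ≤ (1/2) * ((t₁ - b₁)^2 + (t₂ - b₂)^2) + lam1 * Real.sqrt (t₁^2 + t₂^2)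
      + lam2 * (t₁^2 + t₂^2) + lam3 * |t₂| := by
  set c := (1/(1+2*lam2)) * (Real.sign b₁ * max (|b₁| - lam1) 0) with hc
  have hsc : Real.sqrt (c^2 + 0^2) = |c| := by
    rw [show c^2 + 0^2 = c^2 by ring, Real.sqrt_sq_eq_abs]
  have hst : |t₁| ≤ Real.sqrt (t₁^2 + t₂^2) := by
    rw [← Real.sqrt_sq_eq_abs]
    exact Real.sqrt_le_sqrt (by nlinarith [sq_nonneg t₂])
  have h1d := oneD b₁ lam1 lam2 t₁ h1 h2
  rw [← hc] at h1d
  have hbt : b₂ * t₂ ≤ lam3 * |t₂| := by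
    calc b₂ * t₂ ≤ |b₂ * t₂| := le_abs_self _
      _ = |b₂| * |t₂| := abs_mul _ _
      _ ≤ lam3 * |t₂| := mul_le_mul_of_nonneg_right hb2 (abs_nonneg _)
  have hsnd : (1/2)*b₂^2 ≤ (1/2)*(t₂-b₂)^2 + lam2*t₂^2 + lam3*|t₂| := by
    nlinarith [mul_nonneg h2.le (sq_nonneg t₂)]
  rw [hsc, abs_zero]
  have hmul := mul_le_mul_of_nonneg_left hst h1.le
  nlinarith [hmul, h1d, hsnd]

lemma sign_thresh_zero (b lam : ℝ) (hl : 0 < lam)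
    (hs : Real.sign b * max (|b| - lam) 0 = 0) : |b| ≤ lam := by
  by_contra h
  push_neg at h
  have hmax : max (|b| - lam) 0 = |b| - lam := max_eq_left (by linarith)
  have hne : b ≠ 0 := by
    intro h0
    rw [h0, abs_zero] at h; linarith
  rcases lt_trichotomy b 0 with hlt | he | hgt
  · rw [Real.sign_of_neg hlt, hmax] at hs; linarith [hs]
  · exact hne he
  · rw [Real.sign_of_pos hgt, hmax] at hs; linarith [hs]

set_option maxHeartbeats 1000000 in
/-- If the soft-thresholded predictive component vanishes, the minimizer of the
Lemma 1 objective has `θ₂ = 0` and `θ₁` is a scaled soft-thresholding of `b₁`. -/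
theorem vanishing_predictive_component (b₁ b₂ lam1 lam2 lam3 θ₁ θ₂ : ℝ)
    (h1 : 0 < lam1) (h2 : 0 < lam2) (h3 : 0 < lam3)
    (hs : Real.sign b₂ * max (|b₂| - lam3) 0 = 0)
    (hmin : ∀ t₁ t₂ : ℝ,
      (1/2) * ((θ₁ - b₁)^2 + (θ₂ - b₂)^2) + lam1 * Real.sqrt (θ₁^2 + θ₂^2)
          + lam2 * (θ₁^2 + θ₂^2) + lam3 * |θ₂|
        ≤ (1/2) * ((t₁ - b₁)^2 + (t₂ - b₂)^2) + lam1 * Real.sqrt (t₁^2 + t₂^2)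
          + lam2 * (t₁^2 + t₂^2) + lam3 * |t₂|) :
    θ₂ = 0 ∧ θ₁ = (1/(1+2*lam2)) * (Real.sign b₁ * max (|b₁| - lam1) 0) := by
  have hb2 : |b₂| ≤ lam3 := sign_thresh_zero b₂ lam3 h3 hs
  set c := (1/(1+2*lam2)) * (Real.sign b₁ * max (|b₁| - lam1) 0) with hc
  -- value at θ and at the candidate agree
  have hθle := hmin c 0
  have hcle := lowerA b₁ b₂ lam1 lam2 lam3 h1 h2 hb2 θ₁ θ₂
  rw [← hc] at hcle
  have heq : (1/2) * ((θ₁ - b₁)^2 + (θ₂ - b₂)^2) + lam1 * Real.sqrt (θ₁^2 + θ₂^2)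
      + lam2 * (θ₁^2 + θ₂^2) + lam3 * |θ₂|
      = (1/2) * ((c - b₁)^2 + (0 - b₂)^2) + lam1 * Real.sqrt (c^2 + 0^2)
      + lam2 * (c^2 + 0^2) + lam3 * |(0:ℝ)| := le_antisymm hθle hcle
  by_contra hcon
  -- the squared distance between θ and the candidate is positive
  have hD : 0 < ((θ₁-c)/2)^2 + (θ₂/2)^2 := by
    rcases eq_or_ne θ₂ 0 with h0 | h0
    · have hθ1 : θ₁ ≠ c := fun h' => hcon ⟨h0, h'⟩
      have : (θ₁-c)/2 ≠ 0 := by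
        intro h'; apply hθ1; field_simp at h'; linarith
      nlinarith [sq_nonneg (θ₂/2), sq_pos_of_ne_zero this]
    · have : θ₂/2 ≠ 0 := by
        intro h'; apply h0; field_simp at h'; linarith
      nlinarith [sq_nonneg ((θ₁-c)/2), sq_pos_of_ne_zero this]
  -- midpoint
  have hmid := hmin ((θ₁+c)/2) (θ₂/2)
  have hsp : Real.sqrt (((θ₁+c)/2)^2 + (θ₂/2)^2)
      ≤ (Real.sqrt (θ₁^2+θ₂^2) + Real.sqrt (c^2+0^2))/2 := by
    have he : ((θ₁+c)/2)^2 + (θ₂/2)^2 = ((θ₁+c)^2+(θ₂+0)^2) * (1/2)^2 := by ring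
    rw [he, Real.sqrt_mul (by positivity), Real.sqrt_sq (by norm_num)]
    have h := tri2 θ₁ θ₂ c 0
    calc Real.sqrt ((θ₁+c)^2+(θ₂+0)^2) * (1/2)
        ≤ (Real.sqrt (θ₁^2+θ₂^2) + Real.sqrt (c^2+0^2)) * (1/2) :=
          mul_le_mul_of_nonneg_right h (by norm_num)
      _ = (Real.sqrt (θ₁^2+θ₂^2) + Real.sqrt (c^2+0^2))/2 := by ring
  have habs2 : |θ₂/2| = |θ₂|/2 := by
    rw [abs_div]; norm_num
  have hq : (1/2) * (((θ₁+c)/2 - b₁)^2 + (θ₂/2 - b₂)^2)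
      + lam2 * (((θ₁+c)/2)^2 + (θ₂/2)^2) + lam3 * (|θ₂|/2)
      = (1/2) * ((1/2) * ((θ₁ - b₁)^2 + (θ₂ - b₂)^2) + lam2 * (θ₁^2 + θ₂^2) + lam3 * |θ₂|)
      + (1/2) * ((1/2) * ((c - b₁)^2 + (0 - b₂)^2) + lam2 * (c^2 + 0^2) + lam3 * |(0:ℝ)|)
      - (1/2 + lam2) * (((θ₁-c)/2)^2 + (θ₂/2)^2) := by
    rw [abs_zero]; ring
  have hsp' : lam1 * Real.sqrt (((θ₁+c)/2)^2 + (θ₂/2)^2)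
      ≤ lam1 * ((Real.sqrt (θ₁^2+θ₂^2) + Real.sqrt (c^2+0^2))/2) :=
    mul_le_mul_of_nonneg_left hsp h1.le
  rw [habs2] at hmid
  have hDpos : 0 < (1/2 + lam2) * (((θ₁-c)/2)^2 + (θ₂/2)^2) :=
    mul_pos (by linarith) hD
  linarith [hmid, hq, hsp', heq]
end

section
/- Let g(θ) = λ₁‖θ‖₂ + λ₂‖θ‖₂² + λ₃|θ₂| on ℝ² with λ₁, λ₂, λ₃ > 0, and let (θ₁*, θ₂*) be the minimizer of (1/2)‖θ − b‖² + g(θ) for b = (b₁, b₂). Then the minimizer is (0,0) if and only if √(b₁² + s(b₂, λ₃)²) ≤ λ₁, where s(b₂, λ₃) = sign(b₂)(|b₂| − λ₃)₊. -/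
set_option maxHeartbeats 1000000


/-- The minimizer of the Lemma 1 objective is (0,0) iff
`√(b₁² + s(b₂,λ₃)²) ≤ λ₁`. -/
theorem group_zero_characterization (b₁ b₂ lam1 lam2 lam3 θ₁ θ₂ : ℝ)
    (h1 : 0 < lam1) (h2 : 0 < lam2) (h3 : 0 < lam3)
    (hmin : ∀ t₁ t₂ : ℝ,
      (1/2) * ((θ₁ - b₁)^2 + (θ₂ - b₂)^2) + lam1 * Real.sqrt (θ₁^2 + θ₂^2)
          + lam2 * (θ₁^2 + θ₂^2) + lam3 * |θ₂|
        ≤ (1/2) * ((t₁ - b₁)^2 + (t₂ - b₂)^2) + lam1 * Real.sqrt (t₁^2 + t₂^2)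
          + lam2 * (t₁^2 + t₂^2) + lam3 * |t₂|) :
    (θ₁ = 0 ∧ θ₂ = 0) ↔
      Real.sqrt (b₁^2 + (Real.sign b₂ * max (|b₂| - lam3) 0)^2) ≤ lam1 := by
  set m : ℝ := max (|b₂| - lam3) 0 with hm_def
  set s : ℝ := Real.sign b₂ * m with hs_def
  set r : ℝ := Real.sqrt (b₁^2 + s^2) with hr_def
  clear_value m s r
  have hm0 : 0 ≤ m := by rw [hm_def]; exact le_max_right _ _
  have hmb : |b₂| - lam3 ≤ m := by rw [hm_def]; exact le_max_left _ _
  have hs2 : s^2 = m^2 := by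
    rcases lt_trichotomy b₂ 0 with hb | hb | hb
    · simp [hs_def, Real.sign_of_neg hb]
    · have hm' : m = 0 := by
        rw [hm_def, hb, abs_zero, max_eq_right (by linarith)]
      simp [hs_def, hm']
    · simp [hs_def, Real.sign_of_pos hb]
  have hsb : s * b₂ = |b₂| * m := by
    rcases lt_trichotomy b₂ 0 with hb | hb | hb
    · rw [hs_def, Real.sign_of_neg hb, abs_of_neg hb]; ring
    · have hm' : m = 0 := by
        rw [hm_def, hb, abs_zero, max_eq_right (by linarith)]
      simp [hs_def, hm', hb]
    · rw [hs_def, Real.sign_of_pos hb, abs_of_pos hb]; ring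
  have habs : |s| = m := by
    rw [← Real.sqrt_sq_eq_abs, hs2, Real.sqrt_sq hm0]
  have hmm : |b₂| * m - lam3 * m = m^2 := by
    rcases le_total (|b₂| - lam3) 0 with h | h
    · have : m = 0 := hm_def.trans (max_eq_right h)
      simp [this]
    · have : m = |b₂| - lam3 := hm_def.trans (max_eq_left h)
      rw [this]; ring
  have hr0 : 0 ≤ r := by rw [hr_def]; exact Real.sqrt_nonneg _
  have hr2 : r^2 = b₁^2 + m^2 := by
    rw [hr_def, Real.sq_sqrt (by positivity), hs2]
  constructor
  · rintro ⟨hθ1, hθ2⟩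
    subst hθ1; subst hθ2
    by_contra hcon
    push_neg at hcon
    have hrpos : 0 < r := lt_trans h1 hcon
    set c : ℝ := r * (r - lam1) with hc_def
    have hcpos : 0 < c := by
      apply mul_pos hrpos; linarith
    set C : ℝ := (1/2 + lam2) * r^2 with hC_def
    have hCpos : 0 < C := by positivity
    set ε : ℝ := c / (2 * C) with hε_def
    clear_value c C ε
    have hεpos : 0 < ε := by rw [hε_def]; positivity
    have hCe : C * ε = c / 2 := by
      rw [hε_def]; field_simp
    have hmin' := hmin (ε * b₁) (ε * s)
    have hsqz : Real.sqrt ((0:ℝ)^2 + (0:ℝ)^2) = 0 := by simp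
    have hsqt : Real.sqrt ((ε * b₁)^2 + (ε * s)^2) = ε * r := by
      have : (ε * b₁)^2 + (ε * s)^2 = ε^2 * (b₁^2 + s^2) := by ring
      rw [this, Real.sqrt_mul (sq_nonneg ε), Real.sqrt_sq hεpos.le, hr_def]
    have habst : |ε * s| = ε * m := by
      rw [abs_mul, abs_of_pos hεpos, habs]
    rw [hsqz, hsqt, habst] at hmin'
    simp only [abs_zero] at hmin'
    have hident : C * ε^2 - c * ε =
        ((1/2) * ((ε * b₁ - b₁)^2 + (ε * s - b₂)^2) + lam1 * (ε * r)
          + lam2 * ((ε * b₁)^2 + (ε * s)^2) + lam3 * (ε * m))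
        - ((1/2) * ((0 - b₁)^2 + (0 - b₂)^2) + lam1 * 0
          + lam2 * ((0:ℝ)^2 + (0:ℝ)^2) + lam3 * 0) := by
      rw [hC_def, hc_def]
      linear_combination ((1/2 + lam2) * ε^2 - ε) * hr2
        - ((1/2 + lam2) * ε^2) * hs2 + ε * hsb + ε * hmm
    have hkey : 0 ≤ C * ε^2 - c * ε := by
      rw [hident]; linarith [hmin']
    have h'' : C * ε^2 = (c/2) * ε := by
      calc C * ε^2 = (C * ε) * ε := by ring
      _ = (c/2) * ε := by rw [hCe]
    nlinarith [hkey, h'', mul_pos hcpos hεpos]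
  · intro hcond
    by_contra hne
    have hT2pos : 0 < θ₁^2 + θ₂^2 := by
      rcases (not_and_or.mp hne) with h | h
      · positivity
      · positivity
    set T : ℝ := Real.sqrt (θ₁^2 + θ₂^2) with hT_def
    clear_value T
    have hTpos : 0 < T := by rw [hT_def]; exact Real.sqrt_pos.mpr hT2pos
    have hT2 : T^2 = θ₁^2 + θ₂^2 := by rw [hT_def]; exact Real.sq_sqrt hT2pos.le
    have hCS : θ₁ * b₁ + |θ₂| * m ≤ T * r := by
      rcases le_total (θ₁ * b₁ + |θ₂| * m) 0 with h | h
      · exact le_trans h (by positivity)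
      · have hsq : (θ₁ * b₁ + |θ₂| * m)^2 ≤ T^2 * r^2 := by
          rw [hT2, hr2]
          nlinarith [sq_nonneg (θ₁ * m - |θ₂| * b₁), sq_abs θ₂]
        nlinarith [mul_nonneg hTpos.le hr0]
    have h22 : θ₂ * b₂ ≤ |θ₂| * m + |θ₂| * lam3 := by
      have h1' : θ₂ * b₂ ≤ |θ₂| * |b₂| := by
        calc θ₂ * b₂ ≤ |θ₂ * b₂| := le_abs_self _
        _ = |θ₂| * |b₂| := abs_mul _ _
      nlinarith [abs_nonneg θ₂]
    have htr : T * r ≤ T * lam1 := mul_le_mul_of_nonneg_left hcond hTpos.le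
    have hmin' := hmin 0 0
    have hsqz : Real.sqrt ((0:ℝ)^2 + (0:ℝ)^2) = 0 := by simp
    rw [hsqz] at hmin'
    simp only [abs_zero] at hmin'
    have hlam2 : 0 < lam2 * (θ₁^2 + θ₂^2) := mul_pos h2 hT2pos
    linarith [hmin', hCS, h22, htr, hlam2, hT2pos]
end

section
/- Let (θ₁, θ₂) be the minimizer in Lemma 1 with λ₂ = 0. Then ‖(θ₁, θ₂)‖₂ = (√(b₁² + s(b₂, λ₃)²) − λ₁)₊, i.e., the Euclidean norm of the minimizer equals the positive part of the norm of the soft-thresholded input minus λ₁. -/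
set_option maxHeartbeats 1000000 in
/-- With λ₂ = 0, the norm of the Lemma 1 minimizer equals the positive part of
the norm of the soft-thresholded input minus λ₁. -/
theorem minimizer_norm_formula (b₁ b₂ lam1 lam3 θ₁ θ₂ : ℝ)
    (h1 : 0 < lam1) (h3 : 0 < lam3)
    (hmin : ∀ t₁ t₂ : ℝ,
      (1/2) * ((θ₁ - b₁)^2 + (θ₂ - b₂)^2) + lam1 * Real.sqrt (θ₁^2 + θ₂^2) + lam3 * |θ₂|
        ≤ (1/2) * ((t₁ - b₁)^2 + (t₂ - b₂)^2) + lam1 * Real.sqrt (t₁^2 + t₂^2) + lam3 * |t₂|) :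
    Real.sqrt (θ₁^2 + θ₂^2)
      = max (Real.sqrt (b₁^2 + (Real.sign b₂ * max (|b₂| - lam3) 0)^2) - lam1) 0 := by
  set cm : ℝ := max (|b₂| - lam3) 0 with hcm
  set c : ℝ := Real.sign b₂ * cm with hc
  have hcm0 : 0 ≤ cm := le_max_right _ _
  have habs : |c| = cm := by
    rcases lt_trichotomy b₂ 0 with hb | hb | hb
    · rw [hc, Real.sign_of_neg hb]; rw [abs_mul, abs_neg, abs_one, one_mul, abs_of_nonneg hcm0]
    · have : cm = 0 := by
        rw [hcm, hb]; simp; linarith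
      rw [hc, this, mul_zero, abs_zero]
    · rw [hc, Real.sign_of_pos hb]; rw [abs_mul, abs_one, one_mul, abs_of_nonneg hcm0]
  have hc2 : c^2 = cm^2 := by rw [← sq_abs c, habs]
  have hcb : c * b₂ = cm * |b₂| := by
    rcases lt_trichotomy b₂ 0 with hb | hb | hb
    · rw [hc, Real.sign_of_neg hb, abs_of_neg hb]; ring
    · rw [hb]; simp
    · rw [hc, Real.sign_of_pos hb, abs_of_pos hb]; ring
  have hkey : cm * (|b₂| - lam3) = cm^2 := by
    rcases le_or_gt (|b₂| - lam3) 0 with h | h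
    · rw [hcm, max_eq_right h]; ring
    · rw [hcm, max_eq_left h.le]; ring
  have hl3 : lam3 * cm = c * b₂ - c^2 := by linear_combination hc2 - hcb - hkey
  set ρ : ℝ := Real.sqrt (b₁^2 + c^2) with hρ
  set r : ℝ := Real.sqrt (θ₁^2 + θ₂^2) with hr
  have hρ0 : 0 ≤ ρ := Real.sqrt_nonneg _
  have hr0 : 0 ≤ r := Real.sqrt_nonneg _
  have hρsq : ρ^2 = b₁^2 + c^2 := Real.sq_sqrt (by positivity)
  have hrsq : r^2 = θ₁^2 + θ₂^2 := Real.sq_sqrt (by positivity)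
  have ht2 : |θ₂|^2 = θ₂^2 := sq_abs θ₂
  have ht2n : 0 ≤ |θ₂| := abs_nonneg _
  -- Cauchy–Schwarz
  have hrρ : (r*ρ)^2 = (θ₁^2 + θ₂^2) * (b₁^2 + cm^2) := by
    rw [mul_pow, hrsq, hρsq, hc2]
  have hid : (θ₁ * b₁ + |θ₂| * cm)^2 + (θ₁ * cm - |θ₂| * b₁)^2 = (r*ρ)^2 := by
    rw [hrρ]; linear_combination (b₁^2 + cm^2) * ht2
  have hCS : θ₁ * b₁ + |θ₂| * cm ≤ r * ρ := by
    nlinarith only [hid, sq_nonneg (θ₁ * cm - |θ₂| * b₁), mul_nonneg hr0 hρ0]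
  -- lower bound at θ
  have hb2 : θ₂ * b₂ ≤ |θ₂| * |b₂| := by
    calc θ₂ * b₂ ≤ |θ₂ * b₂| := le_abs_self _
    _ = |θ₂| * |b₂| := abs_mul _ _
  have hcmge : |b₂| - lam3 ≤ cm := le_max_left _ _
  have h5 : |θ₂| * |b₂| ≤ |θ₂| * (cm + lam3) :=
    mul_le_mul_of_nonneg_left (by linarith) ht2n
  have hlb : 1/2 * r^2 - ρ * r + lam1 * r + 1/2 * (b₁^2 + b₂^2)
      ≤ (1/2) * ((θ₁ - b₁)^2 + (θ₂ - b₂)^2) + lam1 * r + lam3 * |θ₂| := by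
    linarith only [hCS, hb2, h5, hrsq]
  rcases le_or_gt ρ lam1 with hcase | hcase
  · -- case ρ ≤ λ₁ : minimizer norm is 0
    rw [max_eq_right (by linarith : ρ - lam1 ≤ 0)]
    have h0' : 1/2 * ((θ₁ - b₁)^2 + (θ₂ - b₂)^2) + lam1 * r + lam3 * |θ₂|
        ≤ 1/2 * (b₁^2 + b₂^2) := by
      have h0 := hmin 0 0
      have hs0 : Real.sqrt ((0:ℝ)^2 + (0:ℝ)^2) = 0 := by norm_num
      rw [hs0] at h0
      simp only [abs_zero, mul_zero, add_zero] at h0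
      linarith only [h0]
    have hprod : ρ * r ≤ lam1 * r := mul_le_mul_of_nonneg_right hcase hr0
    have hr2 : r^2 ≤ 0 := by linarith only [hlb, h0', hprod]
    have hr20 : r^2 = 0 := le_antisymm hr2 (sq_nonneg r)
    have : r = 0 := by
      exact sq_eq_zero_iff.mp hr20
    linarith
  · -- case ρ > λ₁ : minimizer norm is ρ - λ₁
    have hρpos : 0 < ρ := lt_trans h1 hcase
    set m : ℝ := ρ - lam1 with hm
    have hm0 : 0 < m := by simp [hm]; linarith
    rw [max_eq_left hm0.le]
    set k : ℝ := m / ρ with hk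
    have hkρ : k * ρ = m := div_mul_cancel₀ _ hρpos.ne'
    have hk0 : 0 ≤ k := div_nonneg hm0.le hρ0
    clear_value m k
    have hk1 : k * (b₁^2 + c^2) = m * ρ := by
      rw [← hρsq]; linear_combination ρ * hkρ
    have hk2 : k^2 * (b₁^2 + c^2) = m^2 := by
      rw [← hρsq]; linear_combination (k*ρ + m) * hkρ
    have hS : Real.sqrt ((k*b₁)^2 + (k*c)^2) = m := by
      have h : (k*b₁)^2 + (k*c)^2 = m^2 := by linear_combination hk2
      rw [h, Real.sqrt_sq hm0.le]
    have hAbs : |k*c| = k * cm := by rw [abs_mul, abs_of_nonneg hk0, habs]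
    have hval : (1/2) * ((k*b₁ - b₁)^2 + (k*c - b₂)^2) + lam1 * m + lam3 * (k * cm)
        = 1/2 * (b₁^2 + b₂^2) - 1/2 * m^2 := by
      have e1 : lam3 * (k * cm) = k * (c * b₂ - c^2) := by
        rw [← mul_assoc, mul_comm lam3 k, mul_assoc, hl3]
      rw [e1]
      linear_combination (1/2) * hk2 - hk1 + m * hm
    have hup := hmin (k*b₁) (k*c)
    rw [hS, hAbs, hval] at hup
    have hmr : ρ * r - lam1 * r = m * r := by rw [hm]; ring
    have hsq : (r - m)^2 ≤ 0 := by nlinarith only [hlb, hup, hmr]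
    have hz : r - m = 0 := sq_eq_zero_iff.mp (le_antisymm hsq (sq_nonneg (r - m)))
    linarith
end

section
/- Fix b₁ ≠ 0 and λ₁, λ₃ > 0, λ₂ = 0, and consider the minimizer (θ₁(b₂), θ₂(b₂)) of l(θ) = (1/2)‖θ − (b₁, b₂)‖² + λ₁‖θ‖₂ + λ₃|θ₂| as a function of b₂. If |b₂| ≤ λ₃ then θ₂(b₂) = 0 and θ₁(b₂) = sign(b₁)(|b₁| − λ₁)₊ does not depend on b₂. -/
/-- If `|b₂| ≤ λ₃` (λ₂ = 0), the minimizer has `θ₂ = 0` and `θ₁` is the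
soft-thresholding of `b₁`, independent of `b₂`. -/
theorem small_predictive_input_shrunk (b₁ b₂ lam1 lam3 θ₁ θ₂ : ℝ)
    (h1 : 0 < lam1) (h3 : 0 < lam3) (hb₁ : b₁ ≠ 0) (hb₂ : |b₂| ≤ lam3)
    (hmin : ∀ t₁ t₂ : ℝ,
      (1/2) * ((θ₁ - b₁)^2 + (θ₂ - b₂)^2) + lam1 * Real.sqrt (θ₁^2 + θ₂^2) + lam3 * |θ₂|
        ≤ (1/2) * ((t₁ - b₁)^2 + (t₂ - b₂)^2) + lam1 * Real.sqrt (t₁^2 + t₂^2) + lam3 * |t₂|) :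
    θ₂ = 0 ∧ θ₁ = Real.sign b₁ * max (|b₁| - lam1) 0 := by
  obtain ⟨c, hc⟩ : ∃ c : ℝ, c = Real.sign b₁ * max (|b₁| - lam1) 0 := ⟨_, rfl⟩
  rw [← hc]
  -- f(c, 0)
  have hsc : Real.sqrt (c^2 + 0^2) = |c| := by
    simp [Real.sqrt_sq_eq_abs]
  -- strong-convexity lower bound at the candidate point
  have hkey : ∀ t₁ t₂ : ℝ,
      (1/2) * ((c - b₁)^2 + (0 - b₂)^2) + lam1 * |c| + lam3 * |(0:ℝ)|
        + (1/2) * ((t₁ - c)^2 + t₂^2)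
      ≤ (1/2) * ((t₁ - b₁)^2 + (t₂ - b₂)^2) + lam1 * Real.sqrt (t₁^2 + t₂^2) + lam3 * |t₂| := by
    intro t₁ t₂
    have hs1 : |t₁| ≤ Real.sqrt (t₁^2 + t₂^2) := by
      rw [← Real.sqrt_sq_eq_abs]
      exact Real.sqrt_le_sqrt (by nlinarith [sq_nonneg t₂])
    have ht1 : t₁ ≤ |t₁| := le_abs_self t₁
    have ht1' : -t₁ ≤ |t₁| := neg_le_abs t₁
    have ht2 : t₂ * b₂ ≤ |t₂| * lam3 := by
      calc t₂ * b₂ ≤ |t₂ * b₂| := le_abs_self _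
        _ = |t₂| * |b₂| := abs_mul _ _
        _ ≤ |t₂| * lam3 := by
            exact mul_le_mul_of_nonneg_left hb₂ (abs_nonneg _)
    simp only [abs_zero, mul_zero, add_zero]
    rcases le_or_gt |b₁| lam1 with hle | hgt
    · have hc0 : c = 0 := by
        rw [hc, max_eq_right (by linarith), mul_zero]
      rw [hc0]
      simp only [abs_zero, mul_zero, add_zero]
      have hb1a : t₁ * b₁ ≤ |t₁| * lam1 := by
        calc t₁ * b₁ ≤ |t₁ * b₁| := le_abs_self _
          _ = |t₁| * |b₁| := abs_mul _ _
          _ ≤ |t₁| * lam1 := mul_le_mul_of_nonneg_left hle (abs_nonneg _)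
      have := mul_le_mul_of_nonneg_left hs1 h1.le
      nlinarith [abs_nonneg t₁, abs_nonneg t₂]
    · rcases hb₁.lt_or_gt with hneg | hpos
      · have hsgn : Real.sign b₁ = -1 := Real.sign_of_neg hneg
        have habs : |b₁| = -b₁ := abs_of_neg hneg
        have hcv : c = b₁ + lam1 := by
          rw [hc, hsgn, max_eq_left (by linarith), habs]; ring
        have hcabs : |c| = -(b₁ + lam1) := by
          rw [hcv, abs_of_neg (by rw [habs] at hgt; linarith)]
        rw [hcabs, hcv]
        have := mul_le_mul_of_nonneg_left (ht1'.trans hs1) h1.le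
        nlinarith [abs_nonneg t₂]
      · have hsgn : Real.sign b₁ = 1 := Real.sign_of_pos hpos
        have habs : |b₁| = b₁ := abs_of_pos hpos
        have hcv : c = b₁ - lam1 := by
          rw [hc, hsgn, max_eq_left (by linarith), habs]; ring
        have hcabs : |c| = b₁ - lam1 := by
          rw [hcv, abs_of_pos (by rw [habs] at hgt; linarith)]
        rw [hcabs, hcv]
        have := mul_le_mul_of_nonneg_left (ht1.trans hs1) h1.le
        nlinarith [abs_nonneg t₂]
  have h1' := hmin c 0
  rw [hsc] at h1'
  simp only [abs_zero, mul_zero, add_zero] at h1'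
  have h2' := hkey θ₁ θ₂
  simp only [abs_zero, mul_zero, add_zero] at h2'
  have hz : (θ₁ - c)^2 + θ₂^2 ≤ 0 := by linarith
  have e2 : θ₂ ^ 2 = 0 :=
    le_antisymm (by nlinarith [sq_nonneg (θ₁ - c)]) (sq_nonneg _)
  have e1 : (θ₁ - c) ^ 2 = 0 :=
    le_antisymm (by nlinarith [sq_nonneg θ₂]) (sq_nonneg _)
  have hθ₂ : θ₂ = 0 := by
    have := pow_eq_zero_iff (n := 2) (by norm_num) |>.mp e2; exact this
  have hθ₁ : θ₁ = c := by
    have := pow_eq_zero_iff (n := 2) (by norm_num) |>.mp e1; linarith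
  exact ⟨hθ₂, hθ₁⟩
end

section
/- Let Vₙ : ℝᵖ → ℝ be a sequence of convex functions converging pointwise to a convex function V that has a unique minimizer u*. If each Vₙ attains a minimizer uₙ and the sequence (uₙ) is bounded, then uₙ → u*. -/
open Filter

/-- A convergent real sequence is uniformly bounded in absolute value. -/
lemma aux_abs_bound_of_tendsto {f : ℕ → ℝ} {a : ℝ}
    (h : Tendsto f atTop (nhds a)) : ∃ B, 0 ≤ B ∧ ∀ n, |f n| ≤ B := by
  obtain ⟨B, hB⟩ := (h.abs).bddAbove_range
  refine ⟨max B 0, le_max_right _ _, fun n => ?_⟩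
  exact le_trans (hB ⟨n, rfl⟩) (le_max_left _ _)

/-- Coordinates are bounded by the Euclidean norm. -/
lemma aux_coord_le_norm {p : ℕ} (x : EuclideanSpace ℝ (Fin p)) (i : Fin p) :
    |x i| ≤ ‖x‖ := by
  rw [EuclideanSpace.norm_eq]
  have h1 : |x i| = Real.sqrt (‖x i‖ ^ 2) := by
    rw [Real.sqrt_sq_eq_abs, abs_norm, Real.norm_eq_abs]
  rw [h1]
  apply Real.sqrt_le_sqrt
  exact Finset.single_le_sum (f := fun j => ‖x j‖ ^ 2)
    (fun j _ => by positivity) (Finset.mem_univ i)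

set_option maxHeartbeats 1000000 in
/-- Deterministic epi-convergence argument: pointwise convergence of convex
functions with bounded minimizers implies convergence of the minimizers to the
unique minimizer of the limit. -/
theorem convex_argmin_convergence (p : ℕ)
    (V : ℕ → EuclideanSpace ℝ (Fin p) → ℝ) (Vlim : EuclideanSpace ℝ (Fin p) → ℝ)
    (hVn : ∀ n, ConvexOn ℝ Set.univ (V n)) (hV : ConvexOn ℝ Set.univ Vlim)
    (hpt : ∀ u, Tendsto (fun n => V n u) atTop (nhds (Vlim u)))
    (ustar : EuclideanSpace ℝ (Fin p))
    (hmin : ∀ u, Vlim ustar ≤ Vlim u)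
    (huniq : ∀ w, (∀ u, Vlim w ≤ Vlim u) → w = ustar)
    (un : ℕ → EuclideanSpace ℝ (Fin p))
    (hun : ∀ n u, V n (un n) ≤ V n u)
    (hbdd : ∃ R, ∀ n, ‖un n‖ ≤ R) :
    Tendsto un atTop (nhds ustar) := by
  classical
  rcases Nat.eq_zero_or_pos p with hp | hp
  · subst hp
    have hsub : Subsingleton (EuclideanSpace ℝ (Fin 0)) := by
      constructor; intro a b
      refine PiLp.ext fun i => ?_; exact absurd i.2 (by omega)
    have : un = fun _ => ustar := by
      funext n; exact hsub.elim _ _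
    rw [this]; exact tendsto_const_nhds
  haveI : Nonempty (Fin p) := ⟨⟨0, hp⟩⟩
  haveI : Nontrivial (EuclideanSpace ℝ (Fin p)) :=
    inferInstanceAs (Nontrivial (PiLp 2 fun _ : Fin p => ℝ))
  obtain ⟨R, hR⟩ := hbdd
  rw [Metric.tendsto_atTop]
  intro ε hε
  -- big radius
  set rr : ℝ := max R (‖ustar‖ + ε) + 2 with hrr_def
  have hrr2 : (2:ℝ) ≤ rr := by
    have : (0:ℝ) ≤ max R (‖ustar‖ + ε) :=
      le_trans (by positivity) (le_max_right _ _)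
    linarith
  have hrr0 : (0:ℝ) < rr := by linarith
  have hun_ball : ∀ n, un n ∈ Metric.ball (0:EuclideanSpace ℝ (Fin p)) rr := by
    intro n
    rw [Metric.mem_ball, dist_zero_right]
    have := hR n
    have : ‖un n‖ ≤ max R (‖ustar‖ + ε) := le_trans this (le_max_left _ _)
    linarith
  have hustar_ball : ustar ∈ Metric.ball (0:EuclideanSpace ℝ (Fin p)) (rr - 1) := by
    rw [Metric.mem_ball, dist_zero_right]
    have h1 : ‖ustar‖ ≤ max R (‖ustar‖ + ε) :=
      le_trans (by linarith [hε.le]) (le_max_right _ _)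
    linarith
  have hsph_ball : Metric.sphere ustar ε ⊆ Metric.ball (0:EuclideanSpace ℝ (Fin p)) (rr - 1) := by
    intro z hz
    rw [Metric.mem_sphere] at hz
    rw [Metric.mem_ball, dist_zero_right]
    have : ‖z‖ ≤ ‖ustar‖ + ε := by
      have htri := dist_triangle z ustar (0:EuclideanSpace ℝ (Fin p))
      rw [dist_zero_right, dist_zero_right] at htri
      rw [dist_comm] at hz
      rw [dist_comm] at htri
      linarith [htri, hz.le, hz.ge]
    have h1 : ‖ustar‖ + ε ≤ max R (‖ustar‖ + ε) := le_max_right _ _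
    linarith
  -- pointwise uniform-in-n bounds
  have hbd : ∀ y : EuclideanSpace ℝ (Fin p), ∃ B, 0 ≤ B ∧ ∀ n, |V n y| ≤ B := fun y =>
    aux_abs_bound_of_tendsto (hpt y)
  choose B hB0 hBle using hbd
  -- basis vectors
  set e : Fin p → EuclideanSpace ℝ (Fin p) := fun i => EuclideanSpace.single i 1 with he_def
  set t : ℝ := (p : ℝ) * rr with ht_def
  have htpos : 0 < t := by
    apply mul_pos _ hrr0
    exact_mod_cast hp
  set g : Fin p → ℝ := fun i => max (B (t • e i)) (B (-(t • e i))) with hg_def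
  have hg0 : ∀ i, 0 ≤ g i := fun i => le_trans (hB0 _) (le_max_left _ _)
  set Cup : ℝ := ∑ i, g i with hCup_def
  have hCup0 : 0 ≤ Cup := Finset.sum_nonneg fun i _ => hg0 i
  -- uniform upper bound on the ball
  have hupper : ∀ n, ∀ x ∈ Metric.ball (0:EuclideanSpace ℝ (Fin p)) rr, V n x ≤ Cup := by
    intro n x hx
    rw [Metric.mem_ball, dist_zero_right] at hx
    -- decomposition
    have hp0 : (p:ℝ) ≠ 0 := by exact_mod_cast hp.ne'
    have hdecomp : x = ∑ i, ((p:ℝ)⁻¹) • (((p : ℝ) * x i) • e i) := by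
      refine PiLp.ext fun j => ?_
      have hsum_apply := map_sum (EuclideanSpace.projₗ (𝕜 := ℝ) j)
        (fun i => ((p:ℝ)⁻¹) • (((p : ℝ) * x i) • e i)) Finset.univ
      simp only [EuclideanSpace.projₗ, PiLp.projₗ] at hsum_apply
      rw [show ((∑ i, ((p:ℝ)⁻¹) • (((p : ℝ) * x i) • e i)) j
          = ∑ i, (((p:ℝ)⁻¹) • (((p : ℝ) * x i) • e i)) j) from hsum_apply]
      simp only [he_def, PiLp.smul_apply, EuclideanSpace.single_apply,
        smul_eq_mul, mul_ite, mul_one, mul_zero, Finset.sum_ite_eq, Finset.mem_univ, if_true]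
      rw [inv_mul_cancel_left₀ hp0]
    have hsum : ∑ i : Fin p, (p:ℝ)⁻¹ = 1 := by
      simp [Finset.sum_const]
      field_simp
    have hjensen := (hVn n).map_sum_le (t := Finset.univ)
      (w := fun _ => (p:ℝ)⁻¹) (p := fun i => ((p : ℝ) * x i) • e i)
      (fun i _ => by positivity) hsum (fun i _ => Set.mem_univ _)
    rw [← hdecomp] at hjensen
    refine le_trans hjensen ?_
    rw [hCup_def]
    apply Finset.sum_le_sum
    intro i _
    simp only [smul_eq_mul]
    have hinv0 : (0:ℝ) < (p:ℝ)⁻¹ := by positivity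
    have hinv1 : ((p:ℝ))⁻¹ ≤ 1 := by
      have h1 : (1:ℝ) ≤ (p:ℝ) := by exact_mod_cast hp
      rw [inv_le_one_iff₀]
      right; exact h1
    suffices hv : V n (((p:ℝ) * x i) • e i) ≤ g i by
      nlinarith [hg0 i]
    have hseg : ((p:ℝ) * x i) • e i ∈ segment ℝ (t • e i) (-(t • e i)) := by
      set c : ℝ := (p:ℝ) * x i with hc_def
      have hcabs : |c| ≤ t := by
        rw [hc_def, ht_def, abs_mul, Nat.abs_cast]
        have := aux_coord_le_norm x i
        have hple : (0:ℝ) ≤ (p:ℝ) := by positivity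
        nlinarith [abs_nonneg (x i)]
      refine ⟨(t + c) / (2 * t), (t - c) / (2 * t), ?_, ?_, ?_, ?_⟩
      · exact div_nonneg (by linarith [(abs_le.mp hcabs).1]) (by positivity)
      · exact div_nonneg (by linarith [(abs_le.mp hcabs).2]) (by positivity)
      · field_simp; ring
      · rw [smul_smul, smul_neg, smul_smul, ← neg_smul, ← add_smul]
        congr 1
        field_simp
        ring
    have hle := (hVn n).le_max_of_mem_segment (Set.mem_univ _) (Set.mem_univ _) hseg
    refine le_trans hle ?_
    apply max_le
    · exact le_trans (le_abs_self _) (le_trans (hBle _ n) (le_max_left _ _))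
    · exact le_trans (le_abs_self _) (le_trans (hBle _ n) (le_max_right _ _))
  -- uniform bound in abs
  set M : ℝ := Cup + 2 * B 0 with hM_def
  have hM0 : 0 ≤ M := by have := hB0 0; linarith
  have habs : ∀ n, ∀ x : EuclideanSpace ℝ (Fin p), dist x 0 < rr → |V n x| ≤ M := by
    intro n x hx
    have hxball : x ∈ Metric.ball (0:EuclideanSpace ℝ (Fin p)) rr := hx
    have hnegball : -x ∈ Metric.ball (0:EuclideanSpace ℝ (Fin p)) rr := by
      rw [Metric.mem_ball, dist_zero_right, norm_neg]
      rwa [Metric.mem_ball, dist_zero_right] at hxball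
    have hup := hupper n x hxball
    have hupneg := hupper n (-x) hnegball
    have hmid : V n 0 ≤ (1/2 : ℝ) * V n x + (1/2 : ℝ) * V n (-x) := by
      have h := (hVn n).2 (Set.mem_univ x) (Set.mem_univ (-x))
        (by norm_num : (0:ℝ) ≤ 1/2) (by norm_num : (0:ℝ) ≤ 1/2) (by norm_num)
      have heq : (1/2 : ℝ) • x + (1/2 : ℝ) • (-x) = (0:EuclideanSpace ℝ (Fin p)) := by
        rw [smul_neg, add_neg_cancel]
      rwa [heq, smul_eq_mul, smul_eq_mul] at h
    have hB0n := hBle 0 n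
    rw [abs_le] at hB0n ⊢
    constructor
    · -- lower bound
      nlinarith [hB0n.1]
    · linarith
  -- equi-Lipschitz on the smaller ball
  have hLip : ∀ n, LipschitzOnWith (2 * M / 1).toNNReal (V n)
      (Metric.ball (0:EuclideanSpace ℝ (Fin p)) (rr - 1)) := by
    intro n
    exact ((hVn n).subset (Set.subset_univ _) (convex_ball _ _)).lipschitzOnWith_of_abs_le
      one_pos (fun a ha => habs n a ha)
  have hLipR : ∀ n, ∀ a ∈ Metric.ball (0:EuclideanSpace ℝ (Fin p)) (rr - 1), ∀ b ∈ Metric.ball (0:EuclideanSpace ℝ (Fin p)) (rr - 1),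
      |V n a - V n b| ≤ (2 * M) * dist a b := by
    intro n a ha b hb
    have h := (hLip n).dist_le_mul a ha b hb
    rw [Real.dist_eq] at h
    refine le_trans h ?_
    apply mul_le_mul_of_nonneg_right _ dist_nonneg
    rw [Real.coe_toNNReal _ (by positivity)]
    norm_num
  -- the sphere, its min, and δ
  have hsph : (Metric.sphere ustar ε).Nonempty :=
    NormedSpace.sphere_nonempty.mpr hε.le
  have hcomp : IsCompact (Metric.sphere ustar ε) := isCompact_sphere _ _
  have hcont : Continuous Vlim := hV.locallyLipschitz.continuous
  obtain ⟨z0, hz0mem, hz0min⟩ := hcomp.exists_isMinOn hsph hcont.continuousOn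
  set c : ℝ := Vlim ustar with hc_def
  set δ : ℝ := Vlim z0 - c with hδ_def
  have hδpos : 0 < δ := by
    rcases lt_or_eq_of_le (hmin z0) with h | h
    · rw [hδ_def]; linarith
    · exfalso
      have hz0glob : ∀ u, Vlim z0 ≤ Vlim u := by
        intro u; rw [← h]; exact hmin u
      have heq := huniq z0 hz0glob
      have hdist := hz0mem
      rw [Metric.mem_sphere, heq, dist_self] at hdist
      linarith
  have hδlower : ∀ z ∈ Metric.sphere ustar ε, c + δ ≤ Vlim z := by
    intro z hz
    have := hz0min hz
    rw [hδ_def]; simp only [Set.mem_setOf_eq] at this ⊢; linarith [this]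
  -- finite net
  set L : ℝ := 2 * M with hL_def
  have hL0 : 0 ≤ L := by positivity
  set ρ : ℝ := δ / (4 * (L + 1)) with hρ_def
  have hρpos : 0 < ρ := by positivity
  have hLρ : L * ρ ≤ δ / 4 := by
    rw [hρ_def, mul_div_assoc']
    rw [div_le_div_iff₀ (by positivity) (by norm_num)]
    nlinarith [hδpos.le, hL0]
  have hcover : Metric.sphere ustar ε ⊆ ⋃ z ∈ Metric.sphere ustar ε, Metric.ball z ρ := by
    intro y hy
    exact Set.mem_biUnion hy (Metric.mem_ball_self hρpos)
  obtain ⟨T, hTsub, hTfin, hTcover⟩ :=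
    hcomp.elim_finite_subcover_image (fun z _ => Metric.isOpen_ball) hcover
  -- eventual bounds
  have hev1 : ∀ᶠ n in atTop, V n ustar < c + δ / 2 :=
    (hpt ustar).eventually_lt_const (by linarith)
  have hev2 : ∀ᶠ n in atTop, ∀ z ∈ T, c + 3 * δ / 4 < V n z := by
    rw [eventually_all_finite hTfin]
    intro z hz
    have hzsph := hTsub hz
    have h34 : c + 3 * δ / 4 < Vlim z := by
      have := hδlower z hzsph; linarith
    exact (hpt z).eventually_const_lt h34
  have hev : ∀ᶠ n in atTop, dist (un n) ustar < ε := by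
    filter_upwards [hev1, hev2] with n h1 h2
    by_contra hcon
    push_neg at hcon
    have hd : ε ≤ ‖un n - ustar‖ := by rwa [dist_eq_norm] at hcon
    have hdpos : 0 < ‖un n - ustar‖ := lt_of_lt_of_le hε hd
    set θ : ℝ := ε / ‖un n - ustar‖ with hθ_def
    have hθpos : 0 < θ := by positivity
    have hθle : θ ≤ 1 := by
      rw [hθ_def, div_le_one hdpos]; exact hd
    set z : EuclideanSpace ℝ (Fin p) := ustar + θ • (un n - ustar) with hz_def
    have hzsph : z ∈ Metric.sphere ustar ε := by
      rw [Metric.mem_sphere, dist_eq_norm, hz_def]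
      have : ustar + θ • (un n - ustar) - ustar = θ • (un n - ustar) := by abel
      rw [this, norm_smul, Real.norm_eq_abs, abs_of_pos hθpos, hθ_def,
        div_mul_cancel₀ _ hdpos.ne']
    -- z is in segment from ustar to un n
    have hseg : z ∈ segment ℝ ustar (un n) := by
      refine ⟨1 - θ, θ, by linarith, hθpos.le, by ring, ?_⟩
      rw [hz_def, sub_smul, one_smul, smul_sub]
      abel
    have hzle : V n z ≤ V n ustar := by
      have h := (hVn n).le_max_of_mem_segment (Set.mem_univ _) (Set.mem_univ _) hseg
      refine le_trans h ?_
      exact max_le le_rfl (hun n ustar)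
    -- z is large via the net
    obtain ⟨z', hz'memU, hz'ball⟩ := Set.mem_iUnion₂.mp (hTcover hzsph)
    have hz'sph := hTsub hz'memU
    have hlip := hLipR n z (hsph_ball hzsph) z' (hsph_ball hz'sph)
    have hz'big := h2 z' hz'memU
    have hdzz : dist z z' < ρ := hz'ball
    have : V n z' - V n z ≤ L * ρ := by
      have h1' : V n z' - V n z ≤ |V n z - V n z'| := by
        rw [abs_sub_comm]; exact le_abs_self _
      refine le_trans h1' (le_trans hlip ?_)
      rw [hL_def]
      exact mul_le_mul_of_nonneg_left hdzz.le (by positivity)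
    have hzbig : c + δ / 2 < V n z := by
      have := hLρ
      linarith
    linarith
  obtain ⟨N, hN⟩ := eventually_atTop.mp hev
  exact ⟨N, hN⟩
end
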